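/- In the graph obtained from K7 by deleting two nonadjacent edges v1v2 and v3v4 and then performing a Δ-Y exchange on the triangle {v1, v3, v6} (adding new vertex v8 of degree 3), there is no K_{4,4}-e minor: any candidate bipartition in which v8 plays the role of the degree-3 vertex forces the five vertices v1, v2, v3, v4, v6 to lie in a common part of size four, a contradiction. -/

import Mathlib

open SimpleGraph

/-- `H` is a minor of `G`: branch-set formulation. -/
def IsMinor {W V : Type*} (H : SimpleGraph W) (G : SimpleGraph V) : Prop :=
  ∃ ρ : W → Set V,
    (∀ w, (ρ w).Nonempty) ∧
    (∀ w, (G.induce (ρ w)).Connected) ∧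
    (Pairwise fun w w' => Disjoint (ρ w) (ρ w')) ∧
    ∀ ⦃w w'⦄, H.Adj w w' → ∃ a ∈ ρ w, ∃ b ∈ ρ w', G.Adj a b

/-- Δ-Y exchange on the triangle `v₁ v₂ v₃`. -/
def deltaY {V : Type*} (G : SimpleGraph V) (v₁ v₂ v₃ : V) : SimpleGraph (V ⊕ Unit) where
  Adj x y :=
    match x, y with
    | .inl a, .inl b => G.Adj a b ∧ s(a, b) ∉ ({s(v₁, v₂), s(v₂, v₃), s(v₁, v₃)} : Set (Sym2 V))
    | .inl a, .inr _ => a = v₁ ∨ a = v₂ ∨ a = v₃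
    | .inr _, .inl a => a = v₁ ∨ a = v₂ ∨ a = v₃
    | .inr _, .inr _ => False
  symm := by
    constructor
    rintro (a | a) (b | b) h
    · exact ⟨h.1.symm, by rw [show s(b, a) = s(a, b) from Sym2.eq_swap]; exact h.2⟩
    · exact h
    · exact h
    · exact h
  loopless := by
    constructor
    rintro (a | a) h
    · exact (G.ne_of_adj h.1) rfl
    · exact h

/-- `K_{4,4}` minus an edge (the edge between `inl 0` and `inr 0`). -/
def K44e : SimpleGraph (Fin 4 ⊕ Fin 4) where
  Adj x y :=
    match x, y with
    | .inl i, .inr j => ¬(i = 0 ∧ j = 0)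
    | .inr j, .inl i => ¬(i = 0 ∧ j = 0)
    | _, _ => False
  symm := by constructor; rintro (i | i) (j | j) h <;> exact h
  loopless := by constructor; rintro (i | i) h <;> exact h

/-- Vertices `0,…,6` stand for `v₁,…,v₇`.  `G` is `K₇` minus the nonadjacent edges
`v₁v₂`, `v₃v₄`; the Δ-Y exchange is performed on the triangle `{v₁, v₃, v₆}`,
adding a new degree-3 vertex `v₈ = Sum.inr ()`. -/
def G₅ : SimpleGraph (Fin 7) := (⊤ : SimpleGraph (Fin 7)).deleteEdges {s(0, 1), s(2, 3)}

def G₅' : SimpleGraph (Fin 7 ⊕ Unit) := deltaY G₅ 0 2 5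

abbrev A (a b : Fin 7) : Prop :=
  a ≠ b ∧ ¬((a=0∧b=1)∨(a=1∧b=0)∨(a=2∧b=3)∨(a=3∧b=2)∨(a=0∧b=2)∨(a=2∧b=0)∨
            (a=2∧b=5)∨(a=5∧b=2)∨(a=0∧b=5)∨(a=5∧b=0))

lemma adj7 (a b : Fin 7) : G₅'.Adj (.inl a) (.inl b) ↔ A a b := by
  show (G₅.Adj a b ∧ s(a,b) ∉ ({s(0,2), s(2,5), s(0,5)} : Set (Sym2 (Fin 7)))) ↔ A a b
  simp [G₅, A, Sym2.eq_iff, not_or, and_assoc]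

set_option synthInstance.maxSize 4000 in
set_option maxHeartbeats 1000000 in
lemma lem2 : ∀ b a1 a2 a3 : Fin 7, (a1=0∨a1=2∨a1=5) → (a2=0∨a2=2∨a2=5) → (a3=0∨a3=2∨a3=5) →
    a1≠a2 → a1≠a3 → a2≠a3 → A b a1 → A b a2 → A b a3 → b = 4 ∨ b = 6 := by decide

lemma lem3 : ∀ b1 b2 b3 : Fin 7, (b1=4∨b1=6) → (b2=4∨b2=6) → (b3=4∨b3=6) →
    b1≠b2 → b1≠b3 → b2≠b3 → False := by decide

set_option synthInstance.maxSize 2000 in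
set_option maxHeartbeats 1000000 in
lemma pigeon4 : ∀ a b c d : Fin 7, (a=0∨a=2∨a=5) → (b=0∨b=2∨b=5) → (c=0∨c=2∨c=5) →
    (d=0∨d=2∨d=5) → a≠b → a≠c → a≠d → b≠c → b≠d → c≠d → False := by decide

lemma main_aux (f : Fin 4 ⊕ Fin 4 → Fin 7 ⊕ Unit) (hinj : Function.Injective f)
    (hhom : ∀ ⦃w w'⦄, K44e.Adj w w' → G₅'.Adj (f w) (f w'))
    (i : Fin 4) (h0 : f (.inl i) = .inr ()) : False := by
  have key1 : ∀ j : Fin 4, ¬(i = 0 ∧ j = 0) →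
      ∃ a : Fin 7, f (.inr j) = .inl a ∧ (a=0∨a=2∨a=5) := by
    intro j hj
    have hadj : K44e.Adj (.inr j) (.inl i) := hj
    have h2 := hhom hadj
    rw [h0] at h2
    rcases hfj : f (.inr j) with a | u
    · rw [hfj] at h2
      exact ⟨a, rfl, h2⟩
    · rw [hfj] at h2
      exact h2.elim
  have hdR : ∀ j j' : Fin 4, ∀ a a' : Fin 7, f (.inr j) = .inl a → f (.inr j') = .inl a' →
      j ≠ j' → a ≠ a' := by
    intro j j' a a' h h' hjj hc
    exact hjj (Sum.inr.inj (hinj (by rw [h, h', hc])))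
  by_cases hi : i = 0
  · -- the degree-3 case
    obtain ⟨a1, hfa1, ha1⟩ := key1 1 (fun h => absurd h.2 (by decide))
    obtain ⟨a2, hfa2, ha2⟩ := key1 2 (fun h => absurd h.2 (by decide))
    obtain ⟨a3, hfa3, ha3⟩ := key1 3 (fun h => absurd h.2 (by decide))
    have h12 := hdR 1 2 a1 a2 hfa1 hfa2 (by decide)
    have h13 := hdR 1 3 a1 a3 hfa1 hfa3 (by decide)
    have h23 := hdR 2 3 a2 a3 hfa2 hfa3 (by decide)
    have keyL : ∀ k : Fin 4, k ≠ 0 → ∃ b : Fin 7, f (.inl k) = .inl b := by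
      intro k hk
      rcases hf : f (.inl k) with b | u
      · exact ⟨b, rfl⟩
      · cases u
        have : (Sum.inl k : Fin 4 ⊕ Fin 4) = .inl i := hinj (by rw [hf, h0])
        exact absurd ((Sum.inl.inj this).trans hi) hk
    obtain ⟨b1, hfb1⟩ := keyL 1 (by decide)
    obtain ⟨b2, hfb2⟩ := keyL 2 (by decide)
    obtain ⟨b3, hfb3⟩ := keyL 3 (by decide)
    have hdL : ∀ k k' : Fin 4, ∀ b b' : Fin 7, f (.inl k) = .inl b → f (.inl k') = .inl b' →
        k ≠ k' → b ≠ b' := by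
      intro k k' b b' h h' hkk hc
      exact hkk (Sum.inl.inj (hinj (by rw [h, h', hc])))
    have hb12 := hdL 1 2 b1 b2 hfb1 hfb2 (by decide)
    have hb13 := hdL 1 3 b1 b3 hfb1 hfb3 (by decide)
    have hb23 := hdL 2 3 b2 b3 hfb2 hfb3 (by decide)
    have hA : ∀ (k j : Fin 4) (b a : Fin 7), k ≠ 0 → f (.inl k) = .inl b →
        f (.inr j) = .inl a → A b a := by
      intro k j b a hk hb ha
      have hadj : K44e.Adj (.inl k) (.inr j) := fun h => hk h.1
      have h2 := hhom hadj
      rw [hb, ha] at h2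
      exact (adj7 _ _).1 h2
    have hc1 := lem2 b1 a1 a2 a3 ha1 ha2 ha3 h12 h13 h23
      (hA 1 1 b1 a1 (by decide) hfb1 hfa1) (hA 1 2 b1 a2 (by decide) hfb1 hfa2)
      (hA 1 3 b1 a3 (by decide) hfb1 hfa3)
    have hc2 := lem2 b2 a1 a2 a3 ha1 ha2 ha3 h12 h13 h23
      (hA 2 1 b2 a1 (by decide) hfb2 hfa1) (hA 2 2 b2 a2 (by decide) hfb2 hfa2)
      (hA 2 3 b2 a3 (by decide) hfb2 hfa3)
    have hc3 := lem2 b3 a1 a2 a3 ha1 ha2 ha3 h12 h13 h23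
      (hA 3 1 b3 a1 (by decide) hfb3 hfa1) (hA 3 2 b3 a2 (by decide) hfb3 hfa2)
      (hA 3 3 b3 a3 (by decide) hfb3 hfa3)
    exact lem3 b1 b2 b3 hc1 hc2 hc3 hb12 hb13 hb23
  · -- i ≠ 0: all four neighbours of v₈-vertex land in a 3-set
    obtain ⟨a0, hfa0, ha0⟩ := key1 0 (fun h => hi h.1)
    obtain ⟨a1, hfa1, ha1⟩ := key1 1 (fun h => hi h.1)
    obtain ⟨a2, hfa2, ha2⟩ := key1 2 (fun h => hi h.1)
    obtain ⟨a3, hfa3, ha3⟩ := key1 3 (fun h => hi h.1)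
    exact pigeon4 a0 a1 a2 a3 ha0 ha1 ha2 ha3
      (hdR 0 1 a0 a1 hfa0 hfa1 (by decide)) (hdR 0 2 a0 a2 hfa0 hfa2 (by decide))
      (hdR 0 3 a0 a3 hfa0 hfa3 (by decide)) (hdR 1 2 a1 a2 hfa1 hfa2 (by decide))
      (hdR 1 3 a1 a3 hfa1 hfa3 (by decide)) (hdR 2 3 a2 a3 hfa2 hfa3 (by decide))

lemma K44e_swap {w w' : Fin 4 ⊕ Fin 4} (h : K44e.Adj w w') : K44e.Adj w.swap w'.swap := by
  rcases w with i | i <;> rcases w' with j | j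
  · exact h
  · exact fun hc => h ⟨hc.2, hc.1⟩
  · exact fun hc => h ⟨hc.2, hc.1⟩
  · exact h

/-- there is no `K_{4,4} - e` minor in `G₅'`. -/
theorem K7_minus_nonadjacent_deltaY_two_removed_no_K44e_minor :
    ¬ IsMinor K44e G₅' := by
  rintro ⟨ρ, hne, -, hdisj, hadj⟩
  classical
  choose g hg using hne
  have hginj : Function.Injective g := by
    intro w w' h
    by_contra hne'
    exact Set.disjoint_left.mp (hdisj hne') (hg w) (h ▸ hg w')
  have h1 : ∀ w, 1 ≤ (ρ w).toFinset.card :=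
    fun w => Finset.card_pos.2 (Set.toFinset_nonempty.2 ⟨g w, hg w⟩)
  have hdisjF : ∀ w w', w ≠ w' → Disjoint (ρ w).toFinset (ρ w').toFinset :=
    fun w w' h => Set.disjoint_toFinset.2 (hdisj h)
  have hsum_le : ∑ w : Fin 4 ⊕ Fin 4, (ρ w).toFinset.card ≤ 8 := by
    rw [← Finset.card_biUnion (fun w _ w' _ h => hdisjF w w' h)]
    calc (Finset.univ.biUnion fun w => (ρ w).toFinset).card
        ≤ (Finset.univ : Finset (Fin 7 ⊕ Unit)).card :=
          Finset.card_le_card (Finset.subset_univ _)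
      _ = 8 := by simp
  have h8 : ∑ _w : Fin 4 ⊕ Fin 4, (1:ℕ) = 8 := by simp
  have hsum_ge : 8 ≤ ∑ w : Fin 4 ⊕ Fin 4, (ρ w).toFinset.card := by
    rw [← h8]
    exact Finset.sum_le_sum (fun w _ => h1 w)
  have htot : ∑ _w : Fin 4 ⊕ Fin 4, (1:ℕ) = ∑ w, (ρ w).toFinset.card := by omega
  have hone := (Finset.sum_eq_sum_iff_of_le (fun w _ => h1 w)).1 htot
  have hsingle : ∀ w, ∀ x ∈ ρ w, x = g w := by
    intro w x hx
    obtain ⟨a, ha⟩ := Finset.card_eq_one.1 (hone w (Finset.mem_univ w)).symm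
    have hxa : x ∈ ({a} : Finset _) := ha ▸ Set.mem_toFinset.2 hx
    have hga : g w ∈ ({a} : Finset _) := ha ▸ Set.mem_toFinset.2 (hg w)
    rw [Finset.mem_singleton.1 hxa, Finset.mem_singleton.1 hga]
  have hhom : ∀ ⦃w w'⦄, K44e.Adj w w' → G₅'.Adj (g w) (g w') := by
    intro w w' h
    obtain ⟨a, ha, b, hb, hab⟩ := hadj h
    rwa [hsingle w a ha, hsingle w' b hb] at hab
  have hbij : Function.Bijective g :=
    (Fintype.bijective_iff_injective_and_card g).2 ⟨hginj, by simp⟩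
  obtain ⟨w0, hw0⟩ := hbij.2 (Sum.inr ())
  rcases w0 with i | j
  · exact main_aux g hginj hhom i hw0
  · refine main_aux (g ∘ Sum.swap) (hginj.comp Sum.swap_leftInverse.injective) ?_ j ?_
    · exact fun w w' h => hhom (K44e_swap h)
    · exact hw0
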